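/- Let ξ : ℝ³ → ℝ³ be a smooth map with everywhere invertible Jacobian ∇ξ and det ∇ξ ≡ 1 (volume preserving), and let U : ℝ³ → ℝ³ be a smooth vector field. Then ∇ × ( (∇ξ)^T (U ∘ ξ) ) = (∇ξ)^{−1} ( (∇ × U) ∘ ξ ) pointwise; that is, the curl of the pulled-back covector field (∇ξ)^T U(ξ) equals the inverse Jacobian applied to the curl of U evaluated along ξ. -/

import Mathlib

noncomputable section

abbrev Pt := Fin 3 → ℝ
abbrev Vec := Fin 3 → ℝ

/-- Partial derivative in the i-th direction. -/
def pd {E : Type*} [NormedAddCommGroup E] [NormedSpace ℝ E]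
    (i : Fin 3) (f : Pt → E) (x : Pt) : E :=
  fderiv ℝ f x (Pi.single i 1)

/-- The Levi-Civita symbol on {0,1,2}: ε_{ijk} = (j−i)(k−j)(k−i)/2. -/
def levi (i j k : Fin 3) : ℝ :=
  (((j : ℕ) : ℝ) - ((i : ℕ) : ℝ)) * (((k : ℕ) : ℝ) - ((j : ℕ) : ℝ))
    * (((k : ℕ) : ℝ) - ((i : ℕ) : ℝ)) / 2

/-- The curl of a vector field, (∇×W)_i = ε_{ijk} ∂_j W_k. -/
def curl (W : Pt → Vec) (x : Pt) : Vec :=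
  fun i => ∑ j, ∑ k, levi i j k * pd j (fun y => W y k) x

/-- The Jacobian matrix of ξ, with entries (∇ξ)_{ij} = ∂_j ξ_i. -/
def jac (ξ : Pt → Pt) (x : Pt) : Matrix (Fin 3) (Fin 3) ℝ :=
  Matrix.of fun i j => pd j (fun y => ξ y i) x

/-! ### Auxiliary lemmas -/

lemma key_alg (a : Matrix (Fin 3) (Fin 3) ℝ) (s : Fin 3 → Fin 3 → Fin 3 → ℝ)
    (u : Fin 3 → ℝ) (d : Fin 3 → Fin 3 → ℝ)
    (hs : ∀ j k m, s j k m = s k j m) (hdet : a.det = 1) (i : Fin 3) :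
    ∑ j, ∑ k, levi i j k * (∑ m, (s j k m * u m + a m k * ∑ n, a n j * d n m))
      = ∑ m, a⁻¹ i m * (∑ n, ∑ p, levi m n p * d n p) := by
  rw [Matrix.inv_def, hdet, Ring.inverse_one, one_smul, Matrix.adjugate_fin_three]
  fin_cases i <;>
    simp only [Fin.sum_univ_three, Fin.isValue, Matrix.cons_val', Matrix.cons_val_zero,
      Matrix.cons_val_one, Matrix.head_cons, Matrix.empty_val', Matrix.cons_val_fin_one,
      Matrix.head_fin_const] <;>
    norm_num [levi, Matrix.cons_val_two]
  · linear_combination u 0 * hs 1 2 0 + u 1 * hs 1 2 1 + u 2 * hs 1 2 2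
  · linear_combination u 0 * hs 2 0 0 + u 1 * hs 2 0 1 + u 2 * hs 2 0 2
  · linear_combination u 0 * hs 0 1 0 + u 1 * hs 0 1 1 + u 2 * hs 0 1 2

lemma pd_proj {f : Pt → Vec} {x : Pt} (hf : DifferentiableAt ℝ f x) (j m : Fin 3) :
    pd j (fun y => f y m) x = pd j f x m := by
  unfold pd
  rw [show (fun y => f y m)
      = (ContinuousLinearMap.proj (R := ℝ) (φ := fun _ : Fin 3 => ℝ) m) ∘ f from rfl,
    ((ContinuousLinearMap.proj (R := ℝ) (φ := fun _ : Fin 3 => ℝ) m).hasFDerivAt.comp x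
      hf.hasFDerivAt).fderiv]
  rfl

lemma contDiff_pdc {f : Pt → Vec} (hf : ∀ n : ℕ, ContDiff ℝ n f) (k m : Fin 3) (n : ℕ) :
    ContDiff ℝ n (fun y => pd k f y m) := by
  have h1 : ContDiff ℝ n (fun y => fderiv ℝ f y) :=
    (hf (n + 1)).fderiv_right (by exact_mod_cast le_refl ((n : ℕ∞) + 1))
  exact (((ContinuousLinearMap.proj (R := ℝ) (φ := fun _ : Fin 3 => ℝ) m).comp
    (ContinuousLinearMap.apply ℝ Vec (Pi.single k (1 : ℝ)))).contDiff).comp h1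

lemma pd_pd_symm {ξ : Pt → Pt} (hξ : ∀ n : ℕ, ContDiff ℝ n ξ) (x : Pt) (j k m : Fin 3) :
    pd j (fun y => pd k ξ y m) x = pd k (fun y => pd j ξ y m) x := by
  have hdf : ∀ y, HasFDerivAt ξ (fderiv ℝ ξ y) y := fun y =>
    (((hξ 1).differentiable (by norm_num)) y).hasFDerivAt
  have h2 : ContDiff ℝ 1 (fun y => fderiv ℝ ξ y) :=
    (hξ 2).fderiv_right (by norm_num)
  have hx : HasFDerivAt (fun y => fderiv ℝ ξ y) (fderiv ℝ (fun y => fderiv ℝ ξ y) x) x :=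
    ((h2.differentiable (by norm_num)) x).hasFDerivAt
  have hsymm := second_derivative_symmetric hdf hx (Pi.single j 1) (Pi.single k 1)
  have hkey : ∀ a b : Fin 3, pd a (fun y => pd b ξ y m) x
      = fderiv ℝ (fun y => fderiv ℝ ξ y) x (Pi.single a 1) (Pi.single b 1) m := by
    intro a b
    set L : (Pt →L[ℝ] Vec) →L[ℝ] ℝ :=
      (ContinuousLinearMap.proj (R := ℝ) (φ := fun _ : Fin 3 => ℝ) m).comp
        (ContinuousLinearMap.apply ℝ Vec (Pi.single b 1)) with hLdef
    have hL1 := L.hasFDerivAt.comp x hx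
    have hfd : fderiv ℝ (fun y => pd b ξ y m) x
        = L.comp (fderiv ℝ (fun y => fderiv ℝ ξ y) x) := hL1.fderiv
    rw [pd, hfd]
    rfl
  rw [hkey j k, hkey k j, hsymm]

lemma pd_sum {g : Fin 3 → Pt → ℝ} {x : Pt} (hg : ∀ m, DifferentiableAt ℝ (g m) x) (j : Fin 3) :
    pd j (fun y => ∑ m, g m y) x = ∑ m, pd j (g m) x := by
  have h : HasFDerivAt (fun y => ∑ m, g m y) (∑ m, fderiv ℝ (g m) x) x :=
    HasFDerivAt.fun_sum fun m _ => (hg m).hasFDerivAt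
  rw [pd, h.fderiv]
  simp [pd]

lemma pd_mul {g h : Pt → ℝ} {x : Pt} (hg : DifferentiableAt ℝ g x)
    (hh : DifferentiableAt ℝ h x) (j : Fin 3) :
    pd j (fun y => g y * h y) x = pd j g x * h x + g x * pd j h x := by
  rw [pd, fderiv_fun_mul hg hh]
  simp only [ContinuousLinearMap.add_apply, ContinuousLinearMap.smul_apply, smul_eq_mul, pd]
  ring

lemma pd_comp_apply {ξ : Pt → Pt} {U : Pt → Vec} (hξ : ∀ n : ℕ, ContDiff ℝ n ξ)
    (hU : ∀ n : ℕ, ContDiff ℝ n U) (x : Pt) (j m : Fin 3) :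
    pd j (fun y => U (ξ y) m) x = ∑ n, pd j ξ x n * pd n (fun z => U z m) (ξ x) := by
  have hξx : DifferentiableAt ℝ ξ x := ((hξ 1).differentiable (by norm_num)) x
  have hUm : DifferentiableAt ℝ (fun z => U z m) (ξ x) :=
    (((ContinuousLinearMap.proj (R := ℝ) (φ := fun _ : Fin 3 => ℝ) m).contDiff.comp
      (hU 1)).differentiable (by norm_num)) (ξ x)
  have hcomp : fderiv ℝ (fun y => U (ξ y) m) x
      = (fderiv ℝ (fun z => U z m) (ξ x)).comp (fderiv ℝ ξ x) := by
    rw [show (fun y => U (ξ y) m) = (fun z => U z m) ∘ ξ from rfl]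
    exact fderiv_comp x hUm hξx
  rw [pd, hcomp]
  simp only [ContinuousLinearMap.coe_comp', Function.comp_apply]
  have hv : (fderiv ℝ ξ x) (Pi.single j 1)
      = ∑ n, (fderiv ℝ ξ x (Pi.single j 1) n) • (Pi.single n 1 : Pt) := by
    funext p
    simp [Finset.sum_apply, Pi.single_apply]
  rw [hv, map_sum]
  simp [pd, smul_eq_mul]

/-- **curl of a pulled-back covector field.** If `ξ : ℝ³ → ℝ³` is smooth,
volume preserving (`det ∇ξ ≡ 1`) with everywhere invertible Jacobian, and `U` is a smooth
vector field, then `∇ × ((∇ξ)ᵀ (U∘ξ)) = (∇ξ)⁻¹ ((∇×U) ∘ ξ)` pointwise. -/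
theorem curl_pullback (ξ : Pt → Pt) (U : Pt → Vec)
    (hξ : ∀ n : ℕ, ContDiff ℝ n ξ) (hU : ∀ n : ℕ, ContDiff ℝ n U)
    (hinv : ∀ x, IsUnit (jac ξ x))
    (hdet : ∀ x, (jac ξ x).det = 1) :
    ∀ (x : Pt) (i : Fin 3),
      curl (fun y i' => ∑ mm, pd i' ξ y mm * U (ξ y) mm) x i
        = ∑ mm, (jac ξ x)⁻¹ i mm * curl U (ξ x) mm := by
  intro x i
  have hξ1 : Differentiable ℝ ξ := (hξ 1).differentiable (by norm_num)
  have hcompd : ∀ m : Fin 3, DifferentiableAt ℝ (fun y => U (ξ y) m) x := by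
    intro m
    have hUm : DifferentiableAt ℝ (fun z => U z m) (ξ x) :=
      (((ContinuousLinearMap.proj (R := ℝ) (φ := fun _ : Fin 3 => ℝ) m).contDiff.comp
        (hU 1)).differentiable (by norm_num)) (ξ x)
    exact DifferentiableAt.comp x hUm (hξ1 x)
  have hjac : ∀ r c : Fin 3, jac ξ x r c = pd c ξ x r := fun r c => pd_proj (hξ1 x) c r
  have hstep : ∀ j k : Fin 3,
      pd j (fun y => ∑ mm, pd k ξ y mm * U (ξ y) mm) x
        = ∑ m, (pd j (fun y => pd k ξ y m) x * U (ξ x) m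
            + jac ξ x m k * ∑ n, jac ξ x n j * pd n (fun z => U z m) (ξ x)) := by
    intro j k
    rw [pd_sum (fun m =>
      (((contDiff_pdc hξ k m 1).differentiable (by norm_num)) x).fun_mul (hcompd m)) j]
    refine Finset.sum_congr rfl fun m _ => ?_
    rw [pd_mul (((contDiff_pdc hξ k m 1).differentiable (by norm_num)) x) (hcompd m) j,
      pd_comp_apply hξ hU x j m]
    rw [hjac m k]
    have hss : ∑ n, pd j ξ x n * pd n (fun z => U z m) (ξ x)
        = ∑ n, jac ξ x n j * pd n (fun z => U z m) (ξ x) :=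
      Finset.sum_congr rfl fun n _ => by rw [hjac n j]
    rw [hss]
  have hmain := key_alg (jac ξ x) (fun j k m => pd j (fun y => pd k ξ y m) x)
    (fun m => U (ξ x) m) (fun n p => pd n (fun z => U z p) (ξ x))
    (fun j k m => pd_pd_symm hξ x j k m) (hdet x) i
  simp only [curl]
  calc ∑ j, ∑ k, levi i j k * pd j (fun y => ∑ mm, pd k ξ y mm * U (ξ y) mm) x
      = ∑ j, ∑ k, levi i j k * (∑ m, (pd j (fun y => pd k ξ y m) x * U (ξ x) m
          + jac ξ x m k * ∑ n, jac ξ x n j * pd n (fun z => U z m) (ξ x))) := by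
        exact Finset.sum_congr rfl fun j _ => Finset.sum_congr rfl fun k _ => by rw [hstep j k]
    _ = ∑ m, (jac ξ x)⁻¹ i m * (∑ n, ∑ p, levi m n p * pd n (fun z => U z p) (ξ x)) := hmain
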